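/- Let 1 ≤ p, q ≤ ∞ with conjugate exponent p' of p. Let ψ_m, ψ_k ∈ 𝒮(ℝ^d) with supp ψ_k ⊂ {x : |x−k|_∞ ≤ 1}, supp ψ_m ⊂ {x : |x−m|_∞ ≤ 1}, ‖ψ_m‖_q ≤ C_m, ‖ψ_k‖_{p'} ≤ C_k, and let φ ∈ 𝒮(ℝ^d) with C_{N,φ} = sup_{|α|≤N} ‖∂^α φ‖_1. Define T_{m,k} f = ψ_m · ℱ^{-1}(φ · ℱ(ψ_k f)). Then ‖T_{m,k} f‖_q ≤ C(d,N) C_m C_k C_{N,φ} ⟨m−k⟩^{-N} ‖f‖_p for all f ∈ 𝒮. -/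

import Mathlib

open MeasureTheory FourierTransform
open scoped ENNReal

section Helpers
open Real
open scoped RealInnerProductSpace

lemma decay_aux {d : ℕ} (N : ℕ) (φ : SchwartzMap (EuclideanSpace ℝ (Fin d)) ℂ) (CNφ : ℝ)
    (h : ∀ j ≤ N, (∫ ξ, ‖iteratedFDeriv ℝ j φ ξ‖) ≤ CNφ) (z : EuclideanSpace ℝ (Fin d)) :
    ‖𝓕 ⇑φ z‖ ≤ (2^N*(1+2^N*(N+1))) * CNφ * (1+‖z‖^2) ^ (-(N:ℝ)/2) := by
  have hCN0 : (0:ℝ) ≤ CNφ := le_trans (by positivity) (h 0 (Nat.zero_le N))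
  have h0 : ‖𝓕 ⇑φ z‖ ≤ CNφ := by
    refine le_trans (VectorFourier.norm_fourierIntegral_le_integral_norm _ _ _ _ _) ?_
    have := h 0 (Nat.zero_le N)
    simpa [norm_iteratedFDeriv_zero] using this
  have hN : ‖z‖^N * ‖𝓕 ⇑φ z‖ ≤ 2^N * ((N+1) * CNφ) := by
    have key := Real.pow_mul_norm_iteratedFDeriv_fourier_le (K := (0:ℕ∞)) (N := (N:ℕ∞))
      (φ.smooth N) (fun k n _ _ => φ.integrable_pow_mul_iteratedFDeriv volume k n)
      (k := 0) (n := N) le_rfl le_rfl z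
    simp only [pow_zero, one_mul, norm_iteratedFDeriv_zero, Nat.cast_ofNat,
      mul_zero, zero_add] at key
    refine key.trans ?_
    have hsum : ∑ p ∈ Finset.range (0 + 1) ×ˢ Finset.range (N + 1),
        ∫ v, ‖v‖ ^ p.1 * ‖iteratedFDeriv ℝ p.2 (⇑φ) v‖ ≤ (N+1) * CNφ := by
      have hterm : ∀ p ∈ Finset.range (0 + 1) ×ˢ Finset.range (N + 1),
          (∫ v, ‖v‖ ^ p.1 * ‖iteratedFDeriv ℝ p.2 (⇑φ) v‖) ≤ CNφ := by
        rintro ⟨a, b⟩ hp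
        simp only [Finset.mem_product, Finset.mem_range] at hp
        obtain rfl : a = 0 := Nat.lt_one_iff.mp hp.1
        simp only [pow_zero, one_mul]
        exact h b (Nat.lt_succ_iff.mp hp.2)
      refine (Finset.sum_le_card_nsmul _ _ _ hterm).trans ?_
      simp [Finset.card_product, mul_comm]
    have h2 : ((2:ℝ) * (0:ℕ) + 2)^N = 2^N := by norm_num
    calc ((2:ℝ) * (0:ℕ) + 2) ^ N * ∑ p ∈ Finset.range (0 + 1) ×ˢ Finset.range (N + 1),
        ∫ v, ‖v‖ ^ p.1 * ‖iteratedFDeriv ℝ p.2 (⇑φ) v‖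
        ≤ ((2:ℝ) * (0:ℕ) + 2) ^ N * ((N+1) * CNφ) := by
          refine mul_le_mul_of_nonneg_left hsum (by positivity)
      _ = 2 ^ N * ((N+1) * CNφ) := by rw [h2]
  set t := ‖z‖ with htdef
  have ht : 0 ≤ t := norm_nonneg _
  have hb : (0:ℝ) < 1 + t^2 := by positivity
  have hrpos : 0 < (1+t^2)^((N:ℝ)/2) := Real.rpow_pos_of_pos hb _
  rw [neg_div, Real.rpow_neg hb.le, ← div_eq_mul_inv, le_div_iff₀ hrpos]
  have e23 : (1+t^2)^((N:ℝ)/2) ≤ (1+t)^N := by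
    have e1 : (1+t^2) ≤ (1+t)^2 := by nlinarith
    have e2 : ((1:ℝ)+t^2)^((N:ℝ)/2) ≤ ((1+t)^2)^((N:ℝ)/2) :=
      Real.rpow_le_rpow (by positivity) e1 (by positivity)
    refine e2.trans_eq ?_
    rw [← Real.rpow_natCast (1+t) 2, ← Real.rpow_natCast (1+t) N,
      ← Real.rpow_mul (by positivity), show ((2:ℕ):ℝ) * ((N:ℝ)/2) = (N:ℝ) by push_cast; ring,
      Real.rpow_natCast]
  have e456 : (1+t)^N ≤ 2^N * (1 + t^N) := by
    have e4 : (1+t)^N ≤ (2*max 1 t)^N := by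
      refine pow_le_pow_left₀ (by positivity) ?_ N
      have := le_max_left (1:ℝ) t
      have := le_max_right (1:ℝ) t
      linarith
    refine e4.trans ?_
    rw [mul_pow]
    gcongr
    rcases le_total (1:ℝ) t with h1 | h1
    · rw [max_eq_right h1]; nlinarith [pow_nonneg ht N]
    · rw [max_eq_left h1]
      have : (0:ℝ) ≤ t^N := pow_nonneg ht N
      simp; linarith
  calc ‖𝓕 ⇑φ z‖ * (1+t^2)^((N:ℝ)/2)
      ≤ ‖𝓕 ⇑φ z‖ * (2^N * (1 + t^N)) := by
        refine mul_le_mul_of_nonneg_left (e23.trans e456) (norm_nonneg _)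
    _ = 2^N * (‖𝓕 ⇑φ z‖ + t^N * ‖𝓕 ⇑φ z‖) := by ring
    _ ≤ 2^N * (CNφ + 2^N * ((N+1) * CNφ)) := by gcongr
    _ = (2^N*(1+2^N*(N+1))) * CNφ := by ring

lemma rep_aux {d : ℕ} (φ : SchwartzMap (EuclideanSpace ℝ (Fin d)) ℂ)
    (g : EuclideanSpace ℝ (Fin d) → ℂ) (hg : Integrable g)
    (hgc : Continuous g) (x : EuclideanSpace ℝ (Fin d)) :
    𝓕⁻ (fun ξ => φ ξ * 𝓕 g ξ) x = ∫ y, g y * 𝓕 ⇑φ (y - x) := by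
  set gF : EuclideanSpace ℝ (Fin d) → ℂ := fun ξ => 𝐞 ⟪ξ, x⟫ • (φ ξ : ℂ) with hgF
  have hgFc : Continuous gF := by
    exact (Real.continuous_fourierChar.comp
      (continuous_id.inner continuous_const)).smul φ.continuous
  have hgFi : Integrable gF := by
    refine (φ.integrable (μ := volume)).norm.mono' hgFc.aestronglyMeasurable ?_
    filter_upwards with ξ
    simp [hgF, norm_smul]
  have key := VectorFourier.integral_fourierIntegral_smul_eq_flip
    (e := Real.fourierChar) (L := innerₗ (EuclideanSpace ℝ (Fin d))) (f := g) (g := gF)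
    Real.continuous_fourierChar continuous_inner hg hgFi
  have hL : 𝓕⁻ (fun ξ => φ ξ * 𝓕 g ξ) x
      = ∫ ξ, (VectorFourier.fourierIntegral 𝐞 volume (innerₗ (EuclideanSpace ℝ (Fin d))) g ξ) • gF ξ := by
    rw [Real.fourierInv_eq]
    congr 1
    ext ξ
    simp only [hgF, Circle.smul_def, smul_eq_mul]
    rw [show 𝓕 g ξ = VectorFourier.fourierIntegral 𝐞 volume (innerₗ (EuclideanSpace ℝ (Fin d))) g ξ from rfl]
    ring
  have hR : ∀ y, VectorFourier.fourierIntegral 𝐞 volume (innerₗ (EuclideanSpace ℝ (Fin d))).flip gF y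
      = 𝓕 ⇑φ (y - x) := by
    intro y
    rw [show 𝓕 ⇑φ (y - x) = VectorFourier.fourierIntegral 𝐞 volume (innerₗ (EuclideanSpace ℝ (Fin d))) ⇑φ (y - x) from rfl, VectorFourier.fourierIntegral, VectorFourier.fourierIntegral]
    congr 1
    ext ξ
    simp only [hgF, LinearMap.flip_apply, innerₗ_apply_apply, smul_smul, ← AddChar.map_add_eq_mul]
    congr 2
    rw [inner_sub_right, real_inner_comm ξ y]
    ring
  rw [hL, key]
  congr 1
  ext y
  rw [hR y, smul_eq_mul]

lemma cube_norm_le {d : ℕ} (a c : EuclideanSpace ℝ (Fin d)) (h : ∀ i, |(a - c) i| ≤ 1) :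
    ‖a - c‖ ≤ Real.sqrt d := by
  rw [EuclideanSpace.norm_eq]
  refine Real.sqrt_le_sqrt ?_
  have : ∀ i ∈ Finset.univ, ‖(a - c) i‖ ^ 2 ≤ 1 := by
    intro i _
    have := h i
    rw [Real.norm_eq_abs]
    nlinarith [abs_nonneg ((a-c) i)]
  refine (Finset.sum_le_card_nsmul _ _ _ this).trans ?_
  simp

end Helpers

/-- Lemma 2.1: off-diagonal decay for `T_{m,k} f = ψ_m · ℱ⁻¹(φ · ℱ(ψ_k f))` where `ψ_m, ψ_k`
are supported in unit cubes around `m` and `k`, with `‖ψ_m‖_q ≤ C_m`, `‖ψ_k‖_{p'} ≤ C_k`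
and `C_{N,φ} = sup_{|α| ≤ N} ‖∂^α φ‖₁`:
`‖T_{m,k} f‖_q ≤ C(d,N) C_m C_k C_{N,φ} ⟨m-k⟩^{-N} ‖f‖_p`. -/
theorem stmt4 (d N : ℕ) :
    ∃ C : ℝ, 0 < C ∧
    ∀ (p q p' : ℝ≥0∞), 1 ≤ p → p ≤ ⊤ → 1 ≤ q → q ≤ ⊤ → 1/p + 1/p' = 1 →
    ∀ (m k : EuclideanSpace ℝ (Fin d))
      (ψm ψk φ f : SchwartzMap (EuclideanSpace ℝ (Fin d)) ℂ)
      (Cm Ck CNφ : ℝ),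
      (Function.support ψm ⊆ {x | ∀ i, |(x - m) i| ≤ 1}) →
      (Function.support ψk ⊆ {x | ∀ i, |(x - k) i| ≤ 1}) →
      eLpNorm (fun x => ψm x) q volume ≤ ENNReal.ofReal Cm →
      eLpNorm (fun x => ψk x) p' volume ≤ ENNReal.ofReal Ck →
      (∀ j ≤ N, (∫ ξ, ‖iteratedFDeriv ℝ j φ ξ‖) ≤ CNφ) →
      eLpNorm (fun x => ψm x *
          (𝓕⁻ (fun ξ => φ ξ * 𝓕 (fun y => ψk y * f y) ξ)) x) q volume
        ≤ ENNReal.ofReal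
            (C * Cm * Ck * CNφ * (1 + ‖m - k‖ ^ 2) ^ (-(N : ℝ) / 2)) *
          eLpNorm (fun x => f x) p volume := by
  refine ⟨(2^N*(1+2^N*(N+1))) * (2+8*(d:ℝ)) ^ ((N:ℝ)/2), by positivity, ?_⟩
  intro p q p' hp hptop hq hqtop hpp' m k ψm ψk φ f Cm Ck CNφ hsm hsk hCm hCk hCN
  set A : ℝ := 2^N*(1+2^N*(N+1)) with hA
  set B : ℝ := (2+8*(d:ℝ)) ^ ((N:ℝ)/2) with hB
  have hA0 : 0 < A := by rw [hA]; positivity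
  have hB0 : 0 < B := by rw [hB]; positivity
  have hCN0 : (0:ℝ) ≤ CNφ := le_trans (by positivity) (hCN 0 (Nat.zero_le N))
  set dec : ℝ := (1 + ‖m - k‖^2) ^ (-(N:ℝ)/2) with hdec
  have hdec0 : 0 < dec := Real.rpow_pos_of_pos (by positivity) _
  set g : EuclideanSpace ℝ (Fin d) → ℂ := fun y => ψk y * f y with hg
  have hfb : ∃ C, ∀ x, ‖ψk x‖ ≤ C :=
    ⟨(SchwartzMap.seminorm ℝ 0 0) ψk, fun x => SchwartzMap.norm_le_seminorm ℝ ψk x⟩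
  have hgi : Integrable g :=
    (f.integrable (μ := volume)).bdd_mul ψk.continuous.aestronglyMeasurable (Filter.Eventually.of_forall (Classical.choose_spec hfb))
  have hgc : Continuous g := ψk.continuous.mul f.continuous
  set I1 : ℝ := ∫ y, ‖g y‖ with hI1
  have hI10 : 0 ≤ I1 := integral_nonneg fun y => norm_nonneg _
  set Dc : ℝ := A * CNφ * B * dec with hDc
  have hDc0 : 0 ≤ Dc := by positivity
  have hsq : Real.sqrt d ^ 2 = (d:ℝ) := Real.sq_sqrt (Nat.cast_nonneg d)
  -- kernel bound on supports
  have hker : ∀ x y, ψm x ≠ 0 → ψk y ≠ 0 → ‖𝓕 ⇑φ (y - x)‖ ≤ Dc := by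
    intro x y hx hy
    have hxm : ‖x - m‖ ≤ Real.sqrt d := cube_norm_le x m (hsm (Function.mem_support.mpr hx))
    have hyk : ‖y - k‖ ≤ Real.sqrt d := cube_norm_le y k (hsk (Function.mem_support.mpr hy))
    have h1 : ‖m - k‖ ≤ ‖y - x‖ + 2*Real.sqrt d := by
      have hid : m - k = (m - x) + (x - y) + (y - k) := by abel
      calc ‖m - k‖ = ‖(m - x) + (x - y) + (y - k)‖ := by rw [← hid]
        _ ≤ ‖m - x‖ + ‖x - y‖ + ‖y - k‖ := norm_add₃_le
        _ ≤ ‖y - x‖ + 2*Real.sqrt d := by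
            rw [norm_sub_rev m x, norm_sub_rev x y]; linarith
    have h2 : 1 + ‖m - k‖^2 ≤ (2+8*(d:ℝ)) * (1 + ‖y - x‖^2) := by
      nlinarith [norm_nonneg (y - x), Real.sqrt_nonneg (d:ℝ), norm_nonneg (m - k),
        sq_nonneg (‖y - x‖ - 2*Real.sqrt d), sq_nonneg (‖y - x‖ * Real.sqrt d)]
    have hrm : (0:ℝ) < (1 + ‖m - k‖^2) ^ ((N:ℝ)/2) := Real.rpow_pos_of_pos (by positivity) _
    have hra : (0:ℝ) < (1 + ‖y - x‖^2) ^ ((N:ℝ)/2) := Real.rpow_pos_of_pos (by positivity) _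
    have h3 : (1 + ‖m - k‖^2) ^ ((N:ℝ)/2) ≤ B * (1 + ‖y - x‖^2) ^ ((N:ℝ)/2) := by
      calc (1 + ‖m - k‖^2) ^ ((N:ℝ)/2)
          ≤ ((2+8*(d:ℝ)) * (1 + ‖y - x‖^2)) ^ ((N:ℝ)/2) :=
            Real.rpow_le_rpow (by positivity) h2 (by positivity)
        _ = B * (1 + ‖y - x‖^2) ^ ((N:ℝ)/2) := Real.mul_rpow (by positivity) (by positivity)
    have hdecinv : dec = ((1 + ‖m - k‖^2) ^ ((N:ℝ)/2))⁻¹ := by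
      rw [hdec, neg_div, Real.rpow_neg (by positivity)]
    have h4 : (1 + ‖y - x‖^2) ^ (-(N:ℝ)/2) ≤ B * dec := by
      rw [hdecinv, ← div_eq_mul_inv, le_div_iff₀ hrm, neg_div,
        Real.rpow_neg (by positivity)]
      calc ((1 + ‖y - x‖^2) ^ ((N:ℝ)/2))⁻¹ * (1 + ‖m - k‖^2) ^ ((N:ℝ)/2)
          ≤ ((1 + ‖y - x‖^2) ^ ((N:ℝ)/2))⁻¹ * (B * (1 + ‖y - x‖^2) ^ ((N:ℝ)/2)) := by
            gcongr
        _ = B := by field_simp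
    calc ‖𝓕 ⇑φ (y - x)‖ ≤ A * CNφ * (1 + ‖y - x‖^2) ^ (-(N:ℝ)/2) :=
          decay_aux N φ CNφ hCN (y - x)
      _ ≤ A * CNφ * (B * dec) := by gcongr
      _ = Dc := by rw [hDc]; ring
  -- pointwise bound
  have hpt : ∀ x, ‖ψm x * (𝓕⁻ (fun ξ => φ ξ * 𝓕 g ξ)) x‖ ≤ (Dc * I1) * ‖ψm x‖ := by
    intro x
    rcases eq_or_ne (ψm x) 0 with h0 | h0
    · simp [h0]
    · rw [norm_mul, mul_comm (‖ψm x‖)]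
      refine mul_le_mul_of_nonneg_right ?_ (norm_nonneg _)
      rw [rep_aux φ g hgi hgc x]
      calc ‖∫ y, g y * 𝓕 ⇑φ (y - x)‖
          ≤ ∫ y, ‖g y * 𝓕 ⇑φ (y - x)‖ := norm_integral_le_integral_norm _
        _ ≤ ∫ y, ‖g y‖ * Dc := by
            refine integral_mono_of_nonneg (Filter.Eventually.of_forall fun y => norm_nonneg _)
              (hgi.norm.mul_const Dc) (Filter.Eventually.of_forall fun y => ?_)
            show ‖g y * 𝓕 ⇑φ (y - x)‖ ≤ ‖g y‖ * Dc
            rw [norm_mul]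
            rcases eq_or_ne (g y) 0 with hy | hy
            · simp [hy]
            · have hψky : ψk y ≠ 0 := fun hk0 => hy (by simp [hg, hk0])
              exact mul_le_mul_of_nonneg_left (hker x y h0 hψky) (norm_nonneg _)
        _ = Dc * I1 := by rw [integral_mul_const, hI1, mul_comm]
  -- eLpNorm chain
  have step1 : eLpNorm (fun x => ψm x * (𝓕⁻ (fun ξ => φ ξ * 𝓕 g ξ)) x) q volume
      ≤ ENNReal.ofReal (Dc * I1) * eLpNorm (fun x => ψm x) q volume := by
    calc _
        ≤ eLpNorm (fun x => (Dc * I1) * ‖ψm x‖) q volume := eLpNorm_mono_real hpt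
      _ = (‖Dc * I1‖₊ : ℝ≥0∞) * eLpNorm (fun x => ‖ψm x‖) q volume := by
          have hfeq : (fun x => (Dc * I1) * ‖ψm x‖) = (Dc * I1) • (fun x => ‖ψm x‖) := by
            funext x; simp
          rw [hfeq, eLpNorm_const_smul, enorm_eq_nnnorm]
      _ = ENNReal.ofReal (Dc * I1) * eLpNorm (fun x => ψm x) q volume := by
          rw [eLpNorm_norm, Real.nnnorm_of_nonneg (by positivity : (0:ℝ) ≤ Dc * I1),
            ENNReal.ofReal, Real.toNNReal_of_nonneg (by positivity : (0:ℝ) ≤ Dc * I1)]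
  have hofI1 : ENNReal.ofReal I1 = eLpNorm g 1 volume := by
    rw [eLpNorm_one_eq_lintegral_enorm, hI1, ofReal_integral_norm_eq_lintegral_enorm hgi]
  have holder : eLpNorm g 1 volume
      ≤ eLpNorm (fun x => ψk x) p' volume * eLpNorm (fun x => f x) p volume := by
    have hpqr : (1:ℝ≥0∞)/1 = 1/p' + 1/p := by
      rw [add_comm, hpp']; simp
    have hH := eLpNorm_smul_le_mul_eLpNorm (μ := volume) (f := (⇑f : _ → ℂ))
      (φ := (⇑ψk : _ → ℂ)) f.continuous.aestronglyMeasurable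
      ψk.continuous.aestronglyMeasurable (p := p') (q := p) (r := 1) (hpqr := ⟨by simpa [one_div] using hpqr.symm⟩)
    have : (⇑ψk • ⇑f : _ → ℂ) = g := by funext y; simp [hg]
    rwa [this] at hH
  calc _
      ≤ ENNReal.ofReal (Dc * I1) * eLpNorm (fun x => ψm x) q volume := step1
    _ ≤ ENNReal.ofReal Dc * ENNReal.ofReal I1 * ENNReal.ofReal Cm := by
        rw [ENNReal.ofReal_mul hDc0]
        exact mul_le_mul_right hCm _
    _ ≤ ENNReal.ofReal Dc * (ENNReal.ofReal Ck * eLpNorm (fun x => f x) p volume)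
          * ENNReal.ofReal Cm := by
        rw [hofI1]
        refine mul_le_mul_left (mul_le_mul_right ?_ _) _
        exact holder.trans (mul_le_mul_left hCk _)
    _ ≤ ENNReal.ofReal (A * B * Cm * Ck * CNφ * dec) * eLpNorm (fun x => f x) p volume := by
        by_cases hCm0 : 0 ≤ Cm
        · by_cases hCk0 : 0 ≤ Ck
          · have : ENNReal.ofReal Dc * (ENNReal.ofReal Ck * eLpNorm (fun x => f x) p volume)
                * ENNReal.ofReal Cm
                = (ENNReal.ofReal Dc * ENNReal.ofReal Ck * ENNReal.ofReal Cm)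
                  * eLpNorm (fun x => f x) p volume := by ring
            rw [this, ← ENNReal.ofReal_mul hDc0, ← ENNReal.ofReal_mul (by positivity)]
            refine mul_le_mul_left (le_of_eq ?_) _
            congr 1
            rw [hDc]; ring
          · rw [ENNReal.ofReal_of_nonpos (le_of_not_ge hCk0)]
            simp
        · rw [ENNReal.ofReal_of_nonpos (le_of_not_ge hCm0)]
          simp
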